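/- Let μ < 0, 1 < p < N, p < q < p^*, and suppose G, Q, P > 0 satisfy G = μγ_q Q + P and P ≤ S^{−p^*/p} G^{p^*/p} (Sobolev), where S > 0 and γ_q > 0. Then G > S^{N/p}, and consequently E := (1/N)G − μγ_q(1/(qγ_q) − 1/p^*) Q > (1/N) S^{N/p}. -/

import Mathlib

/-- Nonexistence energy bound for `μ < 0`: if `G = μγ_q Q + P` with `G, Q, P > 0`, and the
Sobolev inequality `S P^{p/p*} ≤ G` holds, then `G > S^{N/p}` and consequently
`(1/N)G - μγ_q(1/(qγ_q) - 1/p*)Q > (1/N)S^{N/p}`. -/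
theorem stmt_12 (N p q μ S G Q P : ℝ)
    (hp : 1 < p) (hpN : p < N) (hq1 : p < q) (hq2 : q < N * p / (N - p))
    (hμ : μ < 0) (hS : 0 < S) (hG : 0 < G) (hQ : 0 < Q) (hP : 0 < P)
    (heq : G = μ * (N * (q - p) / (p * q)) * Q + P)
    (hsob : S * P ^ (p / (N * p / (N - p))) ≤ G) :
    S ^ (N / p) < G ∧
    (1 / N) * S ^ (N / p) <
      (1 / N) * G - μ * (N * (q - p) / (p * q)) *
        (1 / (q * (N * (q - p) / (p * q))) - 1 / (N * p / (N - p))) * Q := by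
  have hp0 : (0:ℝ) < p := lt_trans one_pos hp
  have hN0 : (0:ℝ) < N := lt_trans hp0 hpN
  have hNp : (0:ℝ) < N - p := sub_pos.mpr hpN
  have hq0 : (0:ℝ) < q := lt_trans hp0 hq1
  have hγ : 0 < N * (q - p) / (p * q) := div_pos (mul_pos hN0 (sub_pos.mpr hq1)) (mul_pos hp0 hq0)
  -- exponent
  have he : p / (N * p / (N - p)) = (N - p) / N := by
    field_simp
  have he0 : 0 < (N - p) / N := by positivity
  -- G < P
  have hGP : G < P := by nlinarith [mul_pos hγ hQ]
  -- first conclusion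
  have hrpow : G ^ ((N-p)/N) < P ^ ((N-p)/N) :=
    Real.rpow_lt_rpow hG.le hGP he0
  have hSG : S * G ^ ((N-p)/N) < G := by
    calc S * G ^ ((N-p)/N) < S * P ^ ((N-p)/N) := by
          exact (mul_lt_mul_iff_right₀ hS).mpr hrpow
      _ ≤ G := by rw [← he]; exact hsob
  have hGsplit : G = G ^ ((N-p)/N) * G ^ (p/N) := by
    rw [← Real.rpow_add hG]
    rw [show (N-p)/N + p/N = 1 by field_simp; ring]
    exact (Real.rpow_one G).symm
  have hS' : S < G ^ (p/N) := by
    have hGe : (0:ℝ) < G ^ ((N-p)/N) := Real.rpow_pos_of_pos hG _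
    nth_rewrite 2 [hGsplit] at hSG
    rw [mul_comm (G ^ ((N-p)/N))] at hSG
    exact lt_of_mul_lt_mul_right hSG hGe.le
  have h1 : S ^ (N / p) < G := by
    have := Real.rpow_lt_rpow hS.le hS' (by positivity : (0:ℝ) < N/p)
    rwa [← Real.rpow_mul hG.le,
      show p/N * (N/p) = 1 by field_simp, Real.rpow_one] at this
    
  refine ⟨h1, ?_⟩
  -- second conclusion
  have hq2' : q * (N - p) < N * p := by
    have h := (lt_div_iff₀ hNp).mp hq2
    linarith
  have hqγ : q * (N * (q - p) / (p * q)) = N * (q - p) / p := by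
    field_simp
  have hlt : N * (q - p) / p < N * p / (N - p) := by
    rw [div_lt_div_iff₀ hp0 hNp]
    nlinarith
  have hterm : 0 < 1 / (q * (N * (q - p) / (p * q))) - 1 / (N * p / (N - p)) := by
    rw [hqγ]
    have h1p : 0 < N * (q - p) / p := div_pos (mul_pos hN0 (sub_pos.mpr hq1)) hp0
    have := one_div_lt_one_div_of_lt h1p hlt
    linarith
  have hpos : 0 < -(μ * (N * (q - p) / (p * q)) *
      (1 / (q * (N * (q - p) / (p * q))) - 1 / (N * p / (N - p))) * Q) := by
    have : μ * (N * (q - p) / (p * q)) < 0 := mul_neg_of_neg_of_pos hμ hγ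
    nlinarith
  have hN1 : 0 < 1/N := by positivity
  nlinarith [(mul_lt_mul_iff_right₀ hN1).mpr h1]
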